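/- Let a and b be operators on ℂ² satisfying ab + ba = 1, a² = 0, b² = 0, with vacua φ₀ (aφ₀ = 0) and Ψ₀ (b*Ψ₀ = 0) normalized by ⟨φ₀,Ψ₀⟩ = 1; set φ₁ := bφ₀, Ψ₁ := a*Ψ₀, N := ba, S_Ψ f := ⟨Ψ₀,f⟩Ψ₀ + ⟨Ψ₁,f⟩Ψ₁, S_Ψ^{1/2} the positive semidefinite square root of S_Ψ, and c := S_Ψ^{1/2} a S_Ψ^{-1/2} with N₀ := c*c. Then N = S_Ψ^{-1/2} N₀ S_Ψ^{1/2} and N* = S_Ψ^{1/2} N₀ S_Ψ^{-1/2}; equivalently, S_Ψ^{1/2} N = N₀ S_Ψ^{1/2} and S_Ψ^{1/2} N₀ = N* S_Ψ^{1/2}. -/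

import Mathlib

open Matrix
open scoped InnerProductSpace ComplexOrder

noncomputable section

/-- Action of a 2×2 complex matrix (an operator) on a vector of ℂ². -/
def act (A : Matrix (Fin 2) (Fin 2) ℂ) (x : EuclideanSpace ℂ (Fin 2)) :
    EuclideanSpace ℂ (Fin 2) := WithLp.toLp 2 (A.mulVec x)

lemma act_act (A B : Matrix (Fin 2) (Fin 2) ℂ) (x : EuclideanSpace ℂ (Fin 2)) :
    act A (act B x) = act (A * B) x := by
  simp only [act, WithLp.ofLp_toLp, Matrix.mulVec_mulVec]

lemma inner_act_left (A : Matrix (Fin 2) (Fin 2) ℂ) (x y : EuclideanSpace ℂ (Fin 2)) :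
    ⟪act Aᴴ x, y⟫_ℂ = ⟪x, act A y⟫_ℂ := by
  simp only [act, EuclideanSpace.inner_eq_star_dotProduct]
  show y.ofLp ⬝ᵥ star (Aᴴ.mulVec x.ofLp) = A.mulVec y.ofLp ⬝ᵥ star x.ofLp
  rw [Matrix.star_mulVec, Matrix.conjTranspose_conjTranspose, dotProduct_comm,
    ← dotProduct_mulVec, dotProduct_comm]

lemma act_smul (A : Matrix (Fin 2) (Fin 2) ℂ) (c : ℂ) (x : EuclideanSpace ℂ (Fin 2)) :
    act A (c • x) = c • act A x := by
  ext i
  simp only [act, Matrix.mulVec, dotProduct, PiLp.smul_apply, smul_eq_mul,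
    Finset.mul_sum]
  exact Finset.sum_congr rfl fun j _ => by ring

lemma act_add (A : Matrix (Fin 2) (Fin 2) ℂ) (x y : EuclideanSpace ℂ (Fin 2)) :
    act A (x + y) = act A x + act A y := by
  ext i
  simp only [act, Matrix.mulVec, dotProduct, PiLp.add_apply, mul_add,
    Finset.sum_add_distrib]

lemma act_sub_mat (A B : Matrix (Fin 2) (Fin 2) ℂ) (x : EuclideanSpace ℂ (Fin 2)) :
    act (A - B) x = act A x - act B x := by
  ext i
  simp only [act, Matrix.sub_mulVec, PiLp.sub_apply, Pi.sub_apply]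

lemma act_one (x : EuclideanSpace ℂ (Fin 2)) : act 1 x = x := by
  ext i
  simp [act]

lemma matrix_ext_of_act (A B : Matrix (Fin 2) (Fin 2) ℂ)
    (h : ∀ v : EuclideanSpace ℂ (Fin 2), act A v = act B v) : A = B := by
  ext i j
  have h1 := congrFun (congrArg WithLp.ofLp (h ((WithLp.equiv 2 _).symm (Pi.single j 1)))) i
  have h2 : (A *ᵥ Pi.single j 1) i = (B *ᵥ Pi.single j 1) i := h1
  simpa [Matrix.mulVec_single] using h2

/-- With `R = S_Ψ^{1/2}`, `c = R a R⁻¹` and `N₀ = c* c`, one has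
`N = R⁻¹ N₀ R`, `N* = R N₀ R⁻¹`; equivalently `R N = N₀ R` and
`R N₀ = N* R`, where `N = b a`. -/
theorem stmt12 (a b SΨ R : Matrix (Fin 2) (Fin 2) ℂ)
    (hab : a * b + b * a = 1) (ha2 : a * a = 0) (hb2 : b * b = 0)
    (φ₀ Ψ₀ : EuclideanSpace ℂ (Fin 2))
    (hvacφ : act a φ₀ = 0) (hvacΨ : act bᴴ Ψ₀ = 0)
    (hnorm : ⟪φ₀, Ψ₀⟫_ℂ = 1)
    (hSΨ : ∀ f, act SΨ f = ⟪Ψ₀, f⟫_ℂ • Ψ₀ + ⟪act aᴴ Ψ₀, f⟫_ℂ • act aᴴ Ψ₀)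
    (hR : R.PosSemidef) (hR2 : R * R = SΨ) :
    b * a = R⁻¹ * ((R * a * R⁻¹)ᴴ * (R * a * R⁻¹)) * R ∧
    (b * a)ᴴ = R * ((R * a * R⁻¹)ᴴ * (R * a * R⁻¹)) * R⁻¹ ∧
    R * (b * a) = ((R * a * R⁻¹)ᴴ * (R * a * R⁻¹)) * R ∧
    R * ((R * a * R⁻¹)ᴴ * (R * a * R⁻¹)) = (b * a)ᴴ * R := by
  set Ψ₁ : EuclideanSpace ℂ (Fin 2) := act aᴴ Ψ₀ with hΨ₁
  -- basic vacuum computations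
  have hab' : a * b = 1 - b * a := by
    rw [← hab]; abel
  have hTab : bᴴ * aᴴ = 1 - aᴴ * bᴴ := by
    have := congrArg Matrix.conjTranspose hab'
    simpa [Matrix.conjTranspose_mul] using this
  have hbΨ₁ : act bᴴ Ψ₁ = Ψ₀ := by
    rw [hΨ₁, act_act, hTab, act_sub_mat, act_one, ← act_act, hvacΨ]
    simp [act]
  have haΨ₁ : act aᴴ Ψ₁ = 0 := by
    rw [hΨ₁, act_act, ← Matrix.conjTranspose_mul, ha2]
    simp [act]
  -- key intertwining relation SΨ b = aᴴ SΨ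
  have key : SΨ * b = aᴴ * SΨ := by
    apply matrix_ext_of_act
    intro f
    rw [← act_act, ← act_act, hSΨ (act b f), hSΨ f]
    have h1 : ⟪Ψ₀, act b f⟫_ℂ = 0 := by
      rw [← inner_act_left, hvacΨ, inner_zero_left]
    have h2 : ⟪Ψ₁, act b f⟫_ℂ = ⟪Ψ₀, f⟫_ℂ := by
      rw [← inner_act_left, hbΨ₁]
    rw [h1, h2, act_add, act_smul, act_smul, ← hΨ₁, haΨ₁]
    simp
  have keyT : bᴴ * SΨ = SΨ * a := by
    have := congrArg Matrix.conjTranspose key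
    rw [Matrix.conjTranspose_mul, Matrix.conjTranspose_mul,
      Matrix.conjTranspose_conjTranspose] at this
    have hSh : SΨᴴ = SΨ := by
      rw [← hR2, Matrix.conjTranspose_mul, hR.1.eq]
    rwa [hSh] at this
  -- invertibility of SΨ via biorthogonality
  set φ₁ : EuclideanSpace ℂ (Fin 2) := act b φ₀ with hφ₁
  have ip00 : ⟪φ₀, Ψ₀⟫_ℂ = 1 := hnorm
  have ip01 : ⟪φ₀, Ψ₁⟫_ℂ = 0 := by
    rw [hΨ₁, ← inner_conj_symm, inner_act_left, hvacφ, inner_zero_right, map_zero]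
  have ip10 : ⟪φ₁, Ψ₀⟫_ℂ = 0 := by
    rw [hφ₁, ← inner_conj_symm, ← inner_act_left, hvacΨ, inner_zero_left, map_zero]
  have ip11 : ⟪φ₁, Ψ₁⟫_ℂ = 1 := by
    rw [hφ₁, hΨ₁, ← inner_conj_symm, inner_act_left, act_act]
    have : act (a * b) φ₀ = φ₀ := by
      rw [hab', act_sub_mat, act_one, ← act_act, hvacφ]
      simp [act]
    rw [this, ← inner_conj_symm, hnorm]
    simp
  set P : Matrix (Fin 2) (Fin 2) ℂ :=
    Matrix.of (fun i j => if j = 0 then Ψ₀ i else Ψ₁ i) with hP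
  set Q : Matrix (Fin 2) (Fin 2) ℂ :=
    Matrix.of (fun i j => star (if i = 0 then φ₀ j else φ₁ j)) with hQ
  have hQP : Q * P = 1 := by
    ext i j
    have e00 := ip00; have e01 := ip01; have e10 := ip10; have e11 := ip11
    simp only [EuclideanSpace.inner_eq_star_dotProduct, dotProduct,
      Fin.sum_univ_two, Pi.star_apply, RCLike.star_def] at e00 e01 e10 e11
    fin_cases i <;> fin_cases j <;>
      simp [hP, hQ, Matrix.mul_apply, Fin.sum_univ_two, Matrix.one_apply] <;>
      first
        | linear_combination e00 | linear_combination e01 | linear_combination e10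
        | linear_combination e11
  have hPunit : IsUnit P.det := by
    have : P * Q = 1 := mul_eq_one_comm.mp hQP
    exact Matrix.isUnit_det_of_right_inverse this
  have hSP : SΨ = P * Pᴴ := by
    apply matrix_ext_of_act
    intro f
    rw [hSΨ f, ← act_act]
    ext i
    simp only [act, hP, Matrix.mulVec, dotProduct, Fin.sum_univ_two,
      Matrix.conjTranspose_apply, Matrix.of_apply, PiLp.add_apply, PiLp.smul_apply,
      smul_eq_mul, EuclideanSpace.inner_eq_star_dotProduct, Pi.star_apply]
    fin_cases i <;> simp <;> ring
  have hSunit : IsUnit SΨ.det := by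
    rw [hSP, Matrix.det_mul, Matrix.det_conjTranspose]
    exact hPunit.mul (hPunit.map (starRingEnd ℂ))
  have hRu : IsUnit R.det := by
    have : R.det * R.det = SΨ.det := by rw [← Matrix.det_mul, hR2]
    exact isUnit_of_mul_isUnit_left (this ▸ hSunit)
  have hRR : R * R⁻¹ = 1 := Matrix.mul_nonsing_inv R hRu
  have hRR' : R⁻¹ * R = 1 := Matrix.nonsing_inv_mul R hRu
  have hRh : Rᴴ = R := hR.1.eq
  have hRih : (R⁻¹)ᴴ = R⁻¹ := by
    rw [Matrix.conjTranspose_nonsing_inv, hRh]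
  -- N₀ in convenient form
  have hN₀ : (R * a * R⁻¹)ᴴ * (R * a * R⁻¹) = R⁻¹ * aᴴ * SΨ * a * R⁻¹ := by
    simp only [Matrix.conjTranspose_mul, hRih, hRh]
    rw [← hR2]
    noncomm_ring
  have g3 : R * (b * a) = ((R * a * R⁻¹)ᴴ * (R * a * R⁻¹)) * R := by
    rw [hN₀]
    symm
    calc R⁻¹ * aᴴ * SΨ * a * R⁻¹ * R
        = R⁻¹ * (aᴴ * SΨ) * a * (R⁻¹ * R) := by noncomm_ring
      _ = R⁻¹ * (SΨ * b) * a * 1 := by rw [key, hRR']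
      _ = R⁻¹ * (R * R) * b * a := by rw [← hR2]; noncomm_ring
      _ = (R⁻¹ * R) * R * b * a := by noncomm_ring
      _ = R * (b * a) := by rw [hRR']; noncomm_ring
  have g4 : R * ((R * a * R⁻¹)ᴴ * (R * a * R⁻¹)) = (b * a)ᴴ * R := by
    rw [hN₀, Matrix.conjTranspose_mul]
    calc R * (R⁻¹ * aᴴ * SΨ * a * R⁻¹)
        = (R * R⁻¹) * aᴴ * SΨ * a * R⁻¹ := by noncomm_ring
      _ = aᴴ * (SΨ * a) * R⁻¹ := by rw [hRR]; noncomm_ring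
      _ = aᴴ * (bᴴ * SΨ) * R⁻¹ := by rw [keyT]
      _ = aᴴ * bᴴ * (R * (R * R⁻¹)) := by rw [← hR2]; noncomm_ring
      _ = aᴴ * bᴴ * R := by rw [hRR]; noncomm_ring
  refine ⟨?_, ?_, g3, g4⟩
  · calc b * a = (R⁻¹ * R) * (b * a) := by rw [hRR']; noncomm_ring
      _ = R⁻¹ * (R * (b * a)) := by noncomm_ring
      _ = R⁻¹ * (((R * a * R⁻¹)ᴴ * (R * a * R⁻¹)) * R) := by rw [g3]
      _ = R⁻¹ * ((R * a * R⁻¹)ᴴ * (R * a * R⁻¹)) * R := by noncomm_ring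
  · calc (b * a)ᴴ = (b * a)ᴴ * (R * R⁻¹) := by rw [hRR]; noncomm_ring
      _ = ((b * a)ᴴ * R) * R⁻¹ := by noncomm_ring
      _ = (R * ((R * a * R⁻¹)ᴴ * (R * a * R⁻¹))) * R⁻¹ := by rw [g4]
      _ = R * ((R * a * R⁻¹)ᴴ * (R * a * R⁻¹)) * R⁻¹ := by noncomm_ring
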